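/- Suppose x_1,…,x_n take exactly two distinct values, with x_i = a for i ≤ n_1 and x_i = c for i > n_1 where a ≠ c and min(n_1, n−n_1) ≥ 3. Let v_1,…,v_n be i.i.d. Beta(1/2,3/2), w_i = v_i/Σ_j v_j, μ* = Σ w_i x_i, σ*² = Σ w_i(x_i−μ*)², and t* = √n(μ*−x̄)/σ*. Then E[(t*)²] < ∞. -/

import Mathlib

open MeasureTheory ProbabilityTheory

/-- The Beta(a,b) distribution on ℝ, with density proportional to
`x^(a-1) (1-x)^(b-1)` on `(0,1)`. -/
noncomputable def betaMeasure (a b : ℝ) : Measure ℝ :=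
  (volume.restrict (Set.Ioo (0:ℝ) 1)).withDensity
    (fun x => ENNReal.ofReal
      (x ^ (a - 1) * (1 - x) ^ (b - 1) /
        (∫ t in Set.Ioo (0:ℝ) 1, t ^ (a - 1) * (1 - t) ^ (b - 1))))

/-- The weighted bootstrap `t` statistic for weights `v` and data `x`. -/
noncomputable def tStar {n : ℕ} (x : Fin n → ℝ) (v : Fin n → ℝ) : ℝ :=
  let w : Fin n → ℝ := fun i => v i / ∑ j, v j
  let μstar : ℝ := ∑ i, w i * x i
  let σstar2 : ℝ := ∑ i, w i * (x i - μstar) ^ 2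
  let xbar : ℝ := (1 / n : ℝ) * ∑ i, x i
  Real.sqrt n * (μstar - xbar) / Real.sqrt σstar2

open Set
open scoped ENNReal

section Aux

private lemma beta_lint (B : ℝ) :
    ∫⁻ x in Set.Ioo (0:ℝ) 1, ENNReal.ofReal (x ^ (-(1/3) : ℝ)) *
      ENNReal.ofReal (x ^ (-(1/2) : ℝ) * (1 - x) ^ ((1/2) : ℝ) / B) < ⊤ := by
  rcases le_or_gt B 0 with hB | hB
  · have h0 : ∀ x ∈ Set.Ioo (0:ℝ) 1, ENNReal.ofReal (x ^ (-(1/3) : ℝ)) *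
      ENNReal.ofReal (x ^ (-(1/2) : ℝ) * (1 - x) ^ ((1/2) : ℝ) / B) = 0 := by
      intro x hx
      have hx0 := hx.1
      have hx1 := hx.2
      have hnn : (0:ℝ) ≤ x ^ (-(1/2) : ℝ) * (1 - x) ^ ((1/2) : ℝ) :=
        mul_nonneg (Real.rpow_nonneg hx0.le _) (Real.rpow_nonneg (by linarith) _)
      have : x ^ (-(1/2) : ℝ) * (1 - x) ^ ((1/2) : ℝ) / B ≤ 0 :=
        div_nonpos_of_nonneg_of_nonpos hnn hB
      rw [ENNReal.ofReal_eq_zero.2 this, mul_zero]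
    rw [setLIntegral_congr_fun measurableSet_Ioo h0]
    simp
  · have hbound : ∀ x ∈ Set.Ioo (0:ℝ) 1, ENNReal.ofReal (x ^ (-(1/3) : ℝ)) *
      ENNReal.ofReal (x ^ (-(1/2) : ℝ) * (1 - x) ^ ((1/2) : ℝ) / B)
        ≤ ENNReal.ofReal (x ^ (-(5/6) : ℝ) * B⁻¹) := by
      intro x hx
      have hx0 := hx.1
      have hx1 := hx.2
      rw [← ENNReal.ofReal_mul (Real.rpow_nonneg hx0.le _)]
      apply ENNReal.ofReal_le_ofReal
      have h1 : (1 - x) ^ ((1/2) : ℝ) ≤ 1 :=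
        Real.rpow_le_one (by linarith) (by linarith) (by norm_num)
      have h2 : x ^ (-(1/3) : ℝ) * x ^ (-(1/2) : ℝ) = x ^ (-(5/6) : ℝ) := by
        rw [← Real.rpow_add hx0]; norm_num
      have hxa : (0:ℝ) ≤ x ^ (-(1/3) : ℝ) * x ^ (-(1/2) : ℝ) :=
        mul_nonneg (Real.rpow_nonneg hx0.le _) (Real.rpow_nonneg hx0.le _)
      calc x ^ (-(1/3) : ℝ) * (x ^ (-(1/2) : ℝ) * (1 - x) ^ ((1/2) : ℝ) / B)
          = (x ^ (-(1/3) : ℝ) * x ^ (-(1/2) : ℝ)) * ((1 - x) ^ ((1/2) : ℝ) * B⁻¹) := by ring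
        _ ≤ (x ^ (-(1/3) : ℝ) * x ^ (-(1/2) : ℝ)) * (1 * B⁻¹) := by
            apply mul_le_mul_of_nonneg_left _ hxa
            exact mul_le_mul_of_nonneg_right h1 (by positivity)
        _ = x ^ (-(5/6) : ℝ) * B⁻¹ := by rw [h2]; ring
    calc ∫⁻ x in Set.Ioo (0:ℝ) 1, ENNReal.ofReal (x ^ (-(1/3) : ℝ)) *
          ENNReal.ofReal (x ^ (-(1/2) : ℝ) * (1 - x) ^ ((1/2) : ℝ) / B)
        ≤ ∫⁻ x in Set.Ioo (0:ℝ) 1, ENNReal.ofReal (x ^ (-(5/6) : ℝ) * B⁻¹) := by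
          apply setLIntegral_mono_ae (by fun_prop) (Filter.Eventually.of_forall hbound)
      _ < ⊤ := by
          have : IntegrableOn (fun x : ℝ => x ^ (-(5/6) : ℝ) * B⁻¹) (Set.Ioo (0:ℝ) 1) :=
            ((intervalIntegral.integrableOn_Ioo_rpow_iff one_pos).2 (by norm_num)).mul_const _
          exact this.setLIntegral_lt_top

private lemma lint_factor {Ω : Type*} [MeasurableSpace Ω] (μ : Measure Ω) (f : Ω → ℝ) (hf : Measurable f)
    (hd : Measure.map f μ = _root_.betaMeasure (1/2) (3/2)) :
    ∫⁻ ω, ENNReal.ofReal (f ω ^ (-(1/3) : ℝ)) ∂μ < ⊤ := by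
  have hg : Measurable fun x : ℝ => ENNReal.ofReal (x ^ (-(1/3):ℝ)) := by fun_prop
  have hdens : Measurable fun x : ℝ => ENNReal.ofReal
      (x ^ ((1:ℝ)/2 - 1) * (1 - x) ^ ((3:ℝ)/2 - 1) /
        (∫ t in Set.Ioo (0:ℝ) 1, t ^ ((1:ℝ)/2 - 1) * (1 - t) ^ ((3:ℝ)/2 - 1))) := by fun_prop
  calc ∫⁻ ω, ENNReal.ofReal (f ω ^ (-(1/3) : ℝ)) ∂μ
      = ∫⁻ x, ENNReal.ofReal (x ^ (-(1/3) : ℝ)) ∂(Measure.map f μ) := (lintegral_map hg hf).symm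
    _ = ∫⁻ x, ENNReal.ofReal (x ^ (-(1/3) : ℝ)) ∂(_root_.betaMeasure (1/2) (3/2)) := by rw [hd]
    _ < ⊤ := by
        rw [_root_.betaMeasure, lintegral_withDensity_eq_lintegral_mul _ hdens hg]
        have := beta_lint (∫ t in Set.Ioo (0:ℝ) 1, t ^ (-(1/2) : ℝ) * (1 - t) ^ ((1/2) : ℝ))
        refine lt_of_eq_of_lt ?_ this
        apply lintegral_congr
        intro x
        norm_num [mul_comm]

private lemma lint_inv_sum {Ω : Type*} [MeasurableSpace Ω] (μ : Measure Ω) {n : ℕ}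
    (v : Fin n → Ω → ℝ) (hmeas : ∀ i, Measurable (v i))
    (hindep : iIndepFun v μ)
    (hfac : ∀ i, ∫⁻ ω, ENNReal.ofReal (v i ω ^ (-(1/3) : ℝ)) ∂μ < ⊤)
    (hE : ∀ᵐ ω ∂μ, ∀ i, v i ω ∈ Set.Ioo (0:ℝ) 1)
    (S : Finset (Fin n)) (i0 i1 i2 : Fin n) (h0 : i0 ∈ S) (h1 : i1 ∈ S) (h2 : i2 ∈ S)
    (h01 : i0 ≠ i1) (h02 : i0 ≠ i2) (h12 : i1 ≠ i2) :
    ∫⁻ ω, ENNReal.ofReal (1 / ∑ i ∈ S, v i ω) ∂μ < ⊤ := by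
  set G : Fin n → Ω → ℝ≥0∞ := fun i ω => ENNReal.ofReal ((v i ω) ^ (-(1/3):ℝ)) with hG
  have hGmeas : ∀ i, Measurable (G i) := fun i => by
    have := hmeas i; fun_prop
  have hGindep : iIndepFun G μ :=
    hindep.comp (fun _ x => ENNReal.ofReal (x ^ (-(1/3):ℝ))) (fun i => by fun_prop)
  have hbound : ∀ᵐ ω ∂μ, ENNReal.ofReal (1 / ∑ i ∈ S, v i ω)
      ≤ (G i0 * G i1 * G i2) ω := by
    filter_upwards [hE] with ω hω
    have hv0 := (hω i0).1
    have hv1 := (hω i1).1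
    have hv2 := (hω i2).1
    set s := ∑ i ∈ S, v i ω with hs
    have hT : ({i0, i1, i2} : Finset (Fin n)) ⊆ S := by
      intro i hi; simp only [Finset.mem_insert, Finset.mem_singleton] at hi
      rcases hi with rfl | rfl | rfl <;> assumption
    have hsumT : ∑ i ∈ ({i0, i1, i2} : Finset (Fin n)), v i ω
        = v i0 ω + v i1 ω + v i2 ω := by
      rw [Finset.sum_insert (by simp [h01, h02]), Finset.sum_insert (by simp [h12]),
        Finset.sum_singleton, add_assoc]
    have hsub : v i0 ω + v i1 ω + v i2 ω ≤ s := by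
      rw [← hsumT]
      exact Finset.sum_le_sum_of_subset_of_nonneg hT (fun i hi _ => (hω i).1.le)
    have hspos : (0:ℝ) < s := lt_of_lt_of_le (by positivity) hsub
    set p := v i0 ω * v i1 ω * v i2 ω with hp
    have hppos : (0:ℝ) < p := by positivity
    have hple : p ≤ s ^ (3:ℕ) := by
      have h1 : p ≤ (v i0 ω + v i1 ω + v i2 ω) ^ (3:ℕ) := by
        set t := v i0 ω + v i1 ω + v i2 ω with ht
        have e0 : v i0 ω ≤ t := by linarith
        have e1 : v i1 ω ≤ t := by linarith
        have e2 : v i2 ω ≤ t := by linarith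
        have : p ≤ t * t * t :=
          mul_le_mul (mul_le_mul e0 e1 hv1.le (by linarith)) e2 hv2.le (by positivity)
        calc p ≤ t * t * t := this
          _ = t ^ (3:ℕ) := by ring
      have h2 : (v i0 ω + v i1 ω + v i2 ω) ^ (3:ℕ) ≤ s ^ (3:ℕ) :=
        pow_le_pow_left₀ (by positivity) hsub 3
      linarith
    have hcbrt : p ^ ((1:ℝ)/3) ≤ s := by
      have : p ^ ((1:ℝ)/3) ≤ (s ^ (3:ℕ)) ^ ((1:ℝ)/3) :=
        Real.rpow_le_rpow hppos.le hple (by norm_num)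
      rwa [← Real.rpow_natCast s 3, ← Real.rpow_mul hspos.le, (by norm_num : (3:ℕ) * ((1:ℝ)/3) = 1),
        Real.rpow_one] at this
    have hinv : 1 / s ≤ p ^ (-((1:ℝ)/3)) := by
      rw [Real.rpow_neg hppos.le, ← one_div]
      exact one_div_le_one_div_of_le (Real.rpow_pos_of_pos hppos _) hcbrt
    have hsplit : p ^ (-((1:ℝ)/3)) = v i0 ω ^ (-((1:ℝ)/3)) * v i1 ω ^ (-((1:ℝ)/3))
        * v i2 ω ^ (-((1:ℝ)/3)) := by
      rw [hp, Real.mul_rpow (by positivity) hv2.le, Real.mul_rpow hv0.le hv1.le]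
    calc ENNReal.ofReal (1 / s) ≤ ENNReal.ofReal (p ^ (-((1:ℝ)/3))) :=
          ENNReal.ofReal_le_ofReal hinv
      _ = (G i0 * G i1 * G i2) ω := by
          simp only [hG, Pi.mul_apply]
          rw [hsplit, ENNReal.ofReal_mul (by positivity), ENNReal.ofReal_mul (by positivity)]
  calc ∫⁻ ω, ENNReal.ofReal (1 / ∑ i ∈ S, v i ω) ∂μ
      ≤ ∫⁻ ω, (G i0 * G i1 * G i2) ω ∂μ := lintegral_mono_ae hbound
    _ = (∫⁻ ω, (G i0 * G i1) ω ∂μ) * ∫⁻ ω, G i2 ω ∂μ :=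
        lintegral_mul_eq_lintegral_mul_lintegral_of_indepFun ((hGmeas i0).mul (hGmeas i1))
          (hGmeas i2) (hGindep.indepFun_mul_left hGmeas i0 i1 i2 h02 h12)
    _ = (∫⁻ ω, G i0 ω ∂μ) * (∫⁻ ω, G i1 ω ∂μ) * ∫⁻ ω, G i2 ω ∂μ := by
        rw [lintegral_mul_eq_lintegral_mul_lintegral_of_indepFun (hGmeas i0) (hGmeas i1)
          (hGindep.indepFun h01)]
    _ < ⊤ := ENNReal.mul_lt_top (ENNReal.mul_lt_top (hfac i0) (hfac i1)) (hfac i2)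

set_option maxHeartbeats 1000000 in
private lemma tstar_bound (n n₁ : ℕ) (a c : ℝ) (hac : a ≠ c) (h3 : 3 ≤ n₁) (hn : n₁ + 3 ≤ n)
    (x : Fin n → ℝ)
    (hx : ∀ i : Fin n, ((i : ℕ) < n₁ → x i = a) ∧ (n₁ ≤ (i : ℕ) → x i = c))
    (vv : Fin n → ℝ) (hv : ∀ i, vv i ∈ Set.Ioo (0:ℝ) 1) :
    tStar x vv ^ 2 ≤ (n:ℝ)^2 *
      (1 / (∑ i ∈ Finset.univ.filter (fun i : Fin n => (i:ℕ) < n₁), vv i)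
       + 1 / (∑ i ∈ Finset.univ.filter (fun i : Fin n => ¬(i:ℕ) < n₁), vv i)) := by
  classical
  set S₁ := Finset.univ.filter (fun i : Fin n => (i:ℕ) < n₁) with hS₁
  set S₂ := Finset.univ.filter (fun i : Fin n => ¬(i:ℕ) < n₁) with hS₂
  set u₁ := ∑ i ∈ S₁, vv i with hu₁
  set u₂ := ∑ i ∈ S₂, vv i with hu₂
  have hmem0 : (⟨0, by omega⟩ : Fin n) ∈ S₁ := by simp [hS₁]; omega
  have hmemn : (⟨n₁, by omega⟩ : Fin n) ∈ S₂ := by simp [hS₂]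
  have hu₁pos : 0 < u₁ := Finset.sum_pos (fun i _ => (hv i).1) ⟨_, hmem0⟩
  have hu₂pos : 0 < u₂ := Finset.sum_pos (fun i _ => (hv i).1) ⟨_, hmemn⟩
  have hssum : ∑ j, vv j = u₁ + u₂ := (Finset.sum_filter_add_sum_filter_not _ _ _).symm
  set s := ∑ j, vv j with hs
  have hspos : 0 < s := by rw [hssum]; linarith
  have hsle : s ≤ n := by
    calc s ≤ ∑ _j : Fin n, (1:ℝ) := Finset.sum_le_sum (fun i _ => (hv i).2.le)
      _ = n := by simp
  -- cardinalities
  have hcard1 : S₁.card = n₁ := by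
    have : S₁ = Finset.Iio (⟨n₁, by omega⟩ : Fin n) := by
      ext i; simp [hS₁, Fin.lt_def]
    rw [this, Fin.card_Iio]
  have hcard2 : S₂.card = n - n₁ := by
    have h := Finset.card_filter_add_card_filter_not
      (s := (Finset.univ : Finset (Fin n))) (p := fun i : Fin n => (i:ℕ) < n₁)
    simp only [← hS₁, ← hS₂] at h
    rw [hcard1] at h
    simp only [Finset.card_univ, Fintype.card_fin] at h
    omega
  -- split lemma
  have hsplit : ∀ f : ℝ → ℝ, (∑ i, vv i / s * f (x i)) = u₁/s * f a + u₂/s * f c := by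
    intro f
    rw [← Finset.sum_filter_add_sum_filter_not Finset.univ (fun i : Fin n => (i:ℕ) < n₁)
      (fun i => vv i / s * f (x i))]
    have e1 : ∀ i ∈ S₁, vv i / s * f (x i) = vv i / s * f a := by
      intro i hi; rw [(hx i).1 (Finset.mem_filter.1 hi).2]
    have e2 : ∀ i ∈ S₂, vv i / s * f (x i) = vv i / s * f c := by
      intro i hi; rw [(hx i).2 (not_lt.1 (Finset.mem_filter.1 hi).2)]
    rw [Finset.sum_congr rfl e1, Finset.sum_congr rfl e2,
      ← Finset.sum_mul, ← Finset.sum_mul, ← Finset.sum_div, ← Finset.sum_div]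
  have hsumx : ∑ i, x i = n₁ * a + (n - n₁ : ℕ) * c := by
    rw [← Finset.sum_filter_add_sum_filter_not Finset.univ (fun i : Fin n => (i:ℕ) < n₁) x]
    rw [Finset.sum_congr rfl (fun i hi => (hx i).1 (Finset.mem_filter.1 hi).2),
      Finset.sum_congr rfl (fun i hi => (hx i).2 (not_lt.1 (Finset.mem_filter.1 hi).2)),
      Finset.sum_const, Finset.sum_const, ← hS₁, ← hS₂, hcard1, hcard2,
      nsmul_eq_mul, nsmul_eq_mul]
  set t := u₁ / s with htdef
  have h1t : u₂ / s = 1 - t := by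
    have e : u₂ = s - u₁ := by rw [hssum]; ring
    rw [htdef, e, sub_div, div_self hspos.ne']
  have htpos : 0 < t := div_pos hu₁pos hspos
  have htlt : t < 1 := (div_lt_one hspos).2 (by rw [hssum]; linarith)
  have hμ : (∑ i, vv i / s * x i) = t*a + (1-t)*c := by
    have := hsplit (fun y => y); beta_reduce at this
    rw [this, h1t]
  have hane : a - c ≠ 0 := sub_ne_zero.mpr hac
  have hsq : (0:ℝ) < (a-c)^2 := lt_of_le_of_ne (sq_nonneg _) (Ne.symm (pow_ne_zero 2 hane))
  have hσpos : 0 < t*(1-t)*(a-c)^2 :=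
    mul_pos (mul_pos htpos (by linarith)) hsq
  have hn0 : (0:ℝ) < n := by exact_mod_cast Nat.pos_of_ne_zero (by omega)
  have hσ : (∑ i, vv i / s * (x i - (t*a+(1-t)*c))^2) = t*(1-t)*(a-c)^2 := by
    rw [hsplit (fun y => (y - (t*a+(1-t)*c))^2), h1t]; ring
  have hform : tStar x vv = Real.sqrt n *
      ((t*a+(1-t)*c) - (1/n) * ((n₁:ℝ)*a + ((n - n₁ : ℕ):ℝ)*c)) /
      Real.sqrt (t*(1-t)*(a-c)^2) := by
    simp only [tStar]
    rw [← hs, hμ, hσ, hsumx]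
  set lam := (n₁:ℝ)/n with hlam
  clear_value S₁ S₂ u₁ u₂ s t lam
  have hcast : ((n - n₁ : ℕ):ℝ) = (n:ℝ) - (n₁:ℝ) := by
    rw [Nat.cast_sub (by omega)]
  have hnum : (t*a+(1-t)*c) - (1/n) * ((n₁:ℝ)*a + ((n - n₁ : ℕ):ℝ)*c)
      = (t - lam)*(a-c) := by
    rw [hcast, hlam]; field_simp; ring
  have hts2 : tStar x vv ^ 2 = (n:ℝ) * ((t - lam)*(a-c))^2 / (t*(1-t)*(a-c)^2) := by
    rw [hform, hnum, div_pow, mul_pow, Real.sq_sqrt hn0.le, Real.sq_sqrt hσpos.le]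
  rw [hts2, div_le_iff₀ hσpos]
  have hlam0 : 0 ≤ lam := by rw [hlam]; positivity
  have hlam1 : lam ≤ 1 := by
    rw [hlam, div_le_one hn0]; exact_mod_cast Nat.cast_le.2 (by omega)
  have htl : (t - lam)^2 ≤ 1 := by nlinarith
  have key2 : (n:ℝ) ≤ (n:ℝ)^2*(1/u₁+1/u₂)*(t*(1-t)) := by
    have e : (n:ℝ)^2*(1/u₁+1/u₂)*(t*(1-t)) = (n:ℝ)^2/s := by
      rw [← h1t, htdef]
      field_simp
      rw [hssum]; ring
    rw [e, le_div_iff₀ hspos]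
    calc (n:ℝ) * s ≤ (n:ℝ) * n := mul_le_mul_of_nonneg_left hsle hn0.le
      _ = (n:ℝ)^2 := (sq (n:ℝ)).symm
  calc (n:ℝ)*((t-lam)*(a-c))^2 = ((n:ℝ)*(t-lam)^2)*(a-c)^2 := by ring
    _ ≤ (n:ℝ)*(a-c)^2 := mul_le_mul_of_nonneg_right (by nlinarith) (sq_nonneg _)
    _ ≤ ((n:ℝ)^2*(1/u₁+1/u₂)*(t*(1-t)))*(a-c)^2 :=
        mul_le_mul_of_nonneg_right key2 (sq_nonneg _)
    _ = (n:ℝ)^2*(1/u₁+1/u₂)*(t*(1-t)*(a-c)^2) := by ring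

end Aux

theorem tstar_sq_integrable_two_values
    {Ω : Type*} [MeasurableSpace Ω] (μ : Measure Ω) [IsProbabilityMeasure μ]
    (n n₁ : ℕ) (a c : ℝ) (hac : a ≠ c)
    (hn₁ : 3 ≤ n₁) (hn₂ : 3 ≤ n - n₁)
    (x : Fin n → ℝ)
    (hx : ∀ i : Fin n, ((i : ℕ) < n₁ → x i = a) ∧ (n₁ ≤ (i : ℕ) → x i = c))
    (v : Fin n → Ω → ℝ)
    (hmeas : ∀ i, Measurable (v i))
    (hindep : iIndepFun v μ)
    (hdist : ∀ i, Measure.map (v i) μ = _root_.betaMeasure (1/2) (3/2)) :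
    ∫⁻ ω, ENNReal.ofReal ((tStar x (fun i => v i ω)) ^ 2) ∂μ < ⊤ := by
  classical
  have hn : n₁ + 3 ≤ n := by omega
  -- almost surely all weights are in (0,1)
  have hnull : ∀ i, μ {ω | ¬ v i ω ∈ Set.Ioo (0:ℝ) 1} = 0 := by
    intro i
    have h1 : μ (v i ⁻¹' (Set.Ioo (0:ℝ) 1)ᶜ)
        = Measure.map (v i) μ ((Set.Ioo (0:ℝ) 1)ᶜ) :=
      (Measure.map_apply (hmeas i) measurableSet_Ioo.compl).symm
    have h2 : {ω | ¬ v i ω ∈ Set.Ioo (0:ℝ) 1} = v i ⁻¹' (Set.Ioo (0:ℝ) 1)ᶜ := rfl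
    rw [h2, h1, hdist i]
    refine MeasureTheory.withDensity_absolutelyContinuous _ _ ?_
    rw [Measure.restrict_apply measurableSet_Ioo.compl]
    simp
  have hE : ∀ᵐ ω ∂μ, ∀ i, v i ω ∈ Set.Ioo (0:ℝ) 1 := by
    rw [ae_all_iff]
    intro i
    exact ae_iff.2 (hnull i)
  set S₁ := Finset.univ.filter (fun i : Fin n => (i:ℕ) < n₁) with hS₁
  set S₂ := Finset.univ.filter (fun i : Fin n => ¬(i:ℕ) < n₁) with hS₂
  set U₁ : Ω → ℝ := fun ω => ∑ i ∈ S₁, v i ω with hU₁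
  set U₂ : Ω → ℝ := fun ω => ∑ i ∈ S₂, v i ω with hU₂
  have hU₁m : Measurable U₁ := Finset.measurable_sum S₁ (fun i _ => hmeas i)
  have hU₂m : Measurable U₂ := Finset.measurable_sum S₂ (fun i _ => hmeas i)
  set C : ℝ≥0∞ := ENNReal.ofReal ((n:ℝ)^2) with hC
  have hbound : ∀ᵐ ω ∂μ, ENNReal.ofReal ((tStar x (fun i => v i ω)) ^ 2)
      ≤ C * (ENNReal.ofReal (1 / U₁ ω) + ENNReal.ofReal (1 / U₂ ω)) := by
    filter_upwards [hE] with ω hω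
    have hb := tstar_bound n n₁ a c hac hn₁ hn x hx (fun i => v i ω) hω
    have hU₁nn : 0 ≤ U₁ ω := Finset.sum_nonneg (fun i _ => (hω i).1.le)
    have hU₂nn : 0 ≤ U₂ ω := Finset.sum_nonneg (fun i _ => (hω i).1.le)
    calc ENNReal.ofReal ((tStar x (fun i => v i ω)) ^ 2)
        ≤ ENNReal.ofReal ((n:ℝ)^2 * (1 / U₁ ω + 1 / U₂ ω)) := ENNReal.ofReal_le_ofReal hb
      _ = C * (ENNReal.ofReal (1 / U₁ ω) + ENNReal.ofReal (1 / U₂ ω)) := by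
          rw [ENNReal.ofReal_mul (by positivity),
            ENNReal.ofReal_add (by positivity) (by positivity)]
  have hfac : ∀ i, ∫⁻ ω, ENNReal.ofReal (v i ω ^ (-(1/3) : ℝ)) ∂μ < ⊤ :=
    fun i => lint_factor μ (v i) (hmeas i) (hdist i)
  have hI₁ : ∫⁻ ω, ENNReal.ofReal (1 / U₁ ω) ∂μ < ⊤ := by
    refine lint_inv_sum μ v hmeas hindep hfac hE S₁ ⟨0, by omega⟩ ⟨1, by omega⟩ ⟨2, by omega⟩
      ?_ ?_ ?_ ?_ ?_ ?_
    · simp [hS₁]; omega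
    · simp [hS₁]; omega
    · simp [hS₁]; omega
    · simp [Fin.ext_iff]
    · simp [Fin.ext_iff]
    · simp [Fin.ext_iff]
  have hI₂ : ∫⁻ ω, ENNReal.ofReal (1 / U₂ ω) ∂μ < ⊤ := by
    refine lint_inv_sum μ v hmeas hindep hfac hE S₂ ⟨n₁, by omega⟩ ⟨n₁+1, by omega⟩
      ⟨n₁+2, by omega⟩ ?_ ?_ ?_ ?_ ?_ ?_
    · simp [hS₂]
    · simp [hS₂]
    · simp [hS₂]
    · simp [Fin.ext_iff]
    · simp [Fin.ext_iff]
    · simp [Fin.ext_iff]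
  calc ∫⁻ ω, ENNReal.ofReal ((tStar x (fun i => v i ω)) ^ 2) ∂μ
      ≤ ∫⁻ ω, C * (ENNReal.ofReal (1 / U₁ ω) + ENNReal.ofReal (1 / U₂ ω)) ∂μ :=
        lintegral_mono_ae hbound
    _ = C * ((∫⁻ ω, ENNReal.ofReal (1 / U₁ ω) ∂μ) + ∫⁻ ω, ENNReal.ofReal (1 / U₂ ω) ∂μ) := by
        rw [lintegral_const_mul (f := fun ω => ENNReal.ofReal (1 / U₁ ω) + ENNReal.ofReal (1 / U₂ ω)) _ ((hU₁m.const_div 1).ennreal_ofReal.add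
          (hU₂m.const_div 1).ennreal_ofReal),
          lintegral_add_left (hU₁m.const_div 1).ennreal_ofReal]
    _ < ⊤ := ENNReal.mul_lt_top ENNReal.ofReal_lt_top (ENNReal.add_lt_top.2 ⟨hI₁, hI₂⟩)
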